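/- Let π : M → B be a surjective submersion. A covariant 2-tensor 𝒯 on M is π-basic (i.e. 𝒯 = π*𝒯^B for some covariant 2-tensor 𝒯^B on B) if and only if s*𝒯 = t*𝒯, where s, t : M ×_B M → M are the two projections of the fiber product. -/

import Mathlib

/-!
STATEMENT 8.  Let `π : M → B` be a (smooth, surjective) submersion with
connected fibers.  A covariant 2-tensor `T` on `M` is π-basic (i.e.
`T = π^* T^B` for some covariant 2-tensor `T^B` on `B`) if and only if
`s^* T = t^* T` on the fiber product `M ×_B M`, where `s, t` are the two
projections.  The condition `s^*T = t^*T` is spelled out pointwise: the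
tangent space of `M ×_B M` at `(x,y)` (with `π x = π y`) consists of the
pairs `(v, w) ∈ T_x M × T_y M` with `dπ_x v = dπ_y w`, and on such pairs the
pullbacks `t^*T((v,v'),(w,w')) = T_x(v,v')` and `s^*T((v,v'),(w,w')) = T_y(w,w')`
must agree.
-/
theorem stmt_8
    {EM : Type*} [NormedAddCommGroup EM] [NormedSpace ℝ EM]
    {HM : Type*} [TopologicalSpace HM] {IM : ModelWithCorners ℝ EM HM}
    {M : Type*} [TopologicalSpace M] [ChartedSpace HM M] [IsManifold IM (⊤ : ℕ∞) M]
    {EB : Type*} [NormedAddCommGroup EB] [NormedSpace ℝ EB]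
    {HB : Type*} [TopologicalSpace HB] {IB : ModelWithCorners ℝ EB HB}
    {B : Type*} [TopologicalSpace B] [ChartedSpace HB B] [IsManifold IB (⊤ : ℕ∞) B]
    (π : M → B) (hπ : ContMDiff IM IB (⊤ : ℕ∞) π)
    (hsurj : Function.Surjective π)
    (hsubm : ∀ x : M, Function.Surjective (mfderiv IM IB π x))
    (hconn : ∀ b : B, IsPreconnected (π ⁻¹' {b}))
    (T : ∀ x : M, TangentSpace IM x →ₗ[ℝ] TangentSpace IM x →ₗ[ℝ] ℝ) :
    (∃ TB : ∀ b : B, TangentSpace IB b →ₗ[ℝ] TangentSpace IB b →ₗ[ℝ] ℝ,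
        ∀ (x : M) (v v' : TangentSpace IM x),
          T x v v' = TB (π x) (mfderiv IM IB π x v) (mfderiv IM IB π x v')) ↔
      (∀ x y : M, π x = π y →
        ∀ (v v' : TangentSpace IM x) (w w' : TangentSpace IM y),
          (mfderiv IM IB π x v : EB) = (mfderiv IM IB π y w : EB) →
          (mfderiv IM IB π x v' : EB) = (mfderiv IM IB π y w' : EB) →
          T x v v' = T y w w') := by
  constructor
  · rintro ⟨TB, hTB⟩ x y hxy v v' w w' hv hv'
    rw [hTB x v v', hTB y w w']
    have hTBeq : TB (π x) = TB (π y) := by rw [hxy]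
    rw [hTBeq, hv, hv']
    rfl

  · intro h
    choose σ hσ using hsurj
    obtain ⟨lift, hlift⟩ : ∃ lift : ∀ b : B, TangentSpace IB b → TangentSpace IM (σ b),
        ∀ (b : B) (u : TangentSpace IB b),
          (mfderiv IM IB π (σ b) (lift b u) : EB) = u :=
      ⟨fun b => Function.surjInv (hsubm (σ b)),
       fun b u => Function.surjInv_eq (hsubm (σ b)) u⟩
    refine ⟨fun b => LinearMap.mk₂ ℝ (fun u u' => T (σ b) (lift b u) (lift b u'))
      ?_ ?_ ?_ ?_, ?_⟩
    · intro u₁ u₂ u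
      show T (σ b) (lift b (u₁ + u₂)) (lift b u)
        = T (σ b) (lift b u₁) (lift b u) + T (σ b) (lift b u₂) (lift b u)
      have := h (σ b) (σ b) rfl (lift b (u₁ + u₂)) (lift b u)
        (lift b u₁ + lift b u₂) (lift b u)
        (by rw [hlift, map_add, hlift, hlift]; rfl) rfl
      rw [this, map_add, LinearMap.add_apply]
    · intro c u₁ u
      show T (σ b) (lift b (c • u₁)) (lift b u) = c • T (σ b) (lift b u₁) (lift b u)
      have := h (σ b) (σ b) rfl (lift b (c • u₁)) (lift b u)
        (c • lift b u₁) (lift b u)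
        (by rw [hlift, map_smul, hlift]; rfl) rfl
      rw [this, map_smul, LinearMap.smul_apply]
    · intro u u₁ u₂
      show T (σ b) (lift b u) (lift b (u₁ + u₂))
        = T (σ b) (lift b u) (lift b u₁) + T (σ b) (lift b u) (lift b u₂)
      have := h (σ b) (σ b) rfl (lift b u) (lift b (u₁ + u₂))
        (lift b u) (lift b u₁ + lift b u₂)
        rfl (by rw [hlift, map_add, hlift, hlift]; rfl)
      rw [this, map_add]
    · intro c u u₁
      show T (σ b) (lift b u) (lift b (c • u₁)) = c • T (σ b) (lift b u) (lift b u₁)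
      have := h (σ b) (σ b) rfl (lift b u) (lift b (c • u₁))
        (lift b u) (c • lift b u₁)
        rfl (by rw [hlift, map_smul, hlift]; rfl)
      rw [this, map_smul]
    · intro x v v'
      show T x v v' = T (σ (π x)) (lift (π x) (mfderiv IM IB π x v))
        (lift (π x) (mfderiv IM IB π x v'))
      exact h x (σ (π x)) (hσ (π x)).symm v v' _ _
        (by rw [hlift]) (by rw [hlift])
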